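/- Let f = f₁⊘f₀ be a nonconstant tropical meromorphic function with reduced representation f = [f₀:f₁] and limsup_{r→∞} (log T_f(r))/r = 0, and let a₁,…,a_q be distinct real numbers such that f⊕a_j ≢ a_j for each j, with associated tropical linear polynomials P_j(x₀,x₁) = max(a_j+x₀, x₁), so that (P_j∘f)(x) = max(a_j+f₀(x), f₁(x)). Then q·T_f(r) = ∑_{j=1}^q N(r, 1₀⊘(P_j∘f)) + o(T_f(r)) as r → ∞ outside a set of zero upper density. -/

import Mathlib

open Filter MeasureTheory Topology
open scoped Classical

noncomputable section

namespace TropNev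

/-- `f` is tropical meromorphic: continuous and piecewise linear
(affine on a small interval on each side of every point). -/
def IsTropMero (f : ℝ → ℝ) : Prop :=
  Continuous f ∧ ∀ x : ℝ, ∃ ε > (0:ℝ), ∃ sR sL : ℝ,
    (∀ t ∈ Set.Icc x (x + ε), f t = f x + sR * (t - x)) ∧
    (∀ t ∈ Set.Icc (x - ε) x, f t = f x + sL * (t - x))

/-- ω_f(x): right derivative minus left derivative. -/
def omega (f : ℝ → ℝ) (x : ℝ) : ℝ :=
  derivWithin f (Set.Ici x) x - derivWithin f (Set.Iic x) x

/-- tropical entire: tropical meromorphic with no poles. -/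
def IsTropEntire (f : ℝ → ℝ) : Prop :=
  IsTropMero f ∧ ∀ x : ℝ, 0 ≤ omega f x

/-- tropical proximity function m(r,f). -/
def prox (f : ℝ → ℝ) (r : ℝ) : ℝ := (max (f r) 0 + max (f (-r)) 0) / 2

/-- tropical counting function of poles N(r,f). -/
def countN (f : ℝ → ℝ) (r : ℝ) : ℝ :=
  (1 / 2) * ∑' b : ℝ, if |b| < r ∧ omega f b < 0 then -omega f b * (r - |b|) else 0

/-- N(r, 1₀ ⊘ g): counting function of the roots of g. -/
def countNroots (g : ℝ → ℝ) (r : ℝ) : ℝ := countN (fun x => -g x) r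

/-- tropical Nevanlinna characteristic T(r,f). -/
def charT (f : ℝ → ℝ) (r : ℝ) : ℝ := prox f r + countN f r

/-- limsup_{r→∞} h(r) = 0 (in the real-analysis sense). -/
def LimsupZero (h : ℝ → ℝ) : Prop :=
  (∀ ε : ℝ, 0 < ε → ∀ᶠ r : ℝ in atTop, h r < ε) ∧
  (∀ ε : ℝ, 0 < ε → ∃ᶠ r : ℝ in atTop, -ε < h r)

/-- liminf_{r→∞} h(r) = 0 (in the real-analysis sense). -/
def LiminfZero (h : ℝ → ℝ) : Prop :=
  (∀ ε : ℝ, 0 < ε → ∃ᶠ r : ℝ in atTop, h r < ε) ∧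
  (∀ ε : ℝ, 0 < ε → ∀ᶠ r : ℝ in atTop, -ε < h r)

/-- E ⊆ [1,∞) has zero upper density. -/
def ZeroUpperDensity (E : Set ℝ) : Prop :=
  LimsupZero fun r => (volume (E ∩ Set.Icc 1 r)).toReal / r

/-- E ⊆ [1,∞) has zero lower density. -/
def ZeroLowerDensity (E : Set ℝ) : Prop :=
  LiminfZero fun r => (volume (E ∩ Set.Icc 1 r)).toReal / r

/-- max of finitely many reals. -/
def tmax {m : ℕ} (F : Fin (m + 1) → ℝ) : ℝ :=
  Finset.univ.sup' Finset.univ_nonempty F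

/-- tropical holomorphic curve with reduced representation f₀,…,f_n :
all components tropical entire, with no common roots. -/
def IsTropCurve {n : ℕ} (f : Fin (n + 1) → ℝ → ℝ) : Prop :=
  (∀ k, IsTropEntire (f k)) ∧ ∀ x : ℝ, ∃ k, ¬ 0 < omega (f k) x

/-- tropical Cartan characteristic T_f(r). -/
def curveT {n : ℕ} (f : Fin (n + 1) → ℝ → ℝ) (r : ℝ) : ℝ :=
  (tmax (fun k => f k r) + tmax (fun k => f k (-r))) / 2 - tmax fun k => f k 0

/-- homogeneous tropical polynomial of degree d in the variables x₀,…,x_n,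
with coefficients in ℝ ∪ {−∞} indexed by the degree-d monomials
(i.e. multisets of size d over the variables), not all −∞. -/
structure TropPoly (n d : ℕ) where
  coeff : Sym (Fin (n + 1)) d → EReal
  nontriv : ∃ s, coeff s ≠ ⊥

/-- value of the monomial term c_I + i₀x₀+⋯+i_nx_n. -/
def TropPoly.term {n d : ℕ} (P : TropPoly n d) (s : Sym (Fin (n + 1)) d)
    (x : Fin (n + 1) → ℝ) : EReal :=
  P.coeff s + (((Multiset.map x (s : Multiset (Fin (n + 1)))).sum : ℝ) : EReal)

def TropPoly.evalE {n d : ℕ} (P : TropPoly n d) (x : Fin (n + 1) → ℝ) : EReal :=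
  Finset.univ.sup fun s => P.term s x

/-- the tropical hypersurface V_P : points where the maximum is attained
by at least two monomials. -/
def TropPoly.hyp {n d : ℕ} (P : TropPoly n d) : Set (Fin (n + 1) → ℝ) :=
  {x | ∃ s t : Sym (Fin (n + 1)) d, s ≠ t ∧
        P.term s x = P.evalE x ∧ P.term t x = P.evalE x}

/-- the composition P ∘ f. -/
def TropPoly.compo {n d : ℕ} (P : TropPoly n d) (f : Fin (n + 1) → ℝ → ℝ) : ℝ → ℝ :=
  fun t => (P.evalE fun k => f k t).toReal

/-- ‖a‖ = max_I c_I for the coefficient vector of P. -/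
def TropPoly.coeffNorm {n d : ℕ} (P : TropPoly n d) : ℝ :=
  (Finset.univ.sup fun s => P.coeff s).toReal

/-- tropical Weil function λ_{V_P}(f(x)) = d‖f(x)‖ + d‖a‖ − (P∘f)(x). -/
def weil {n d : ℕ} (P : TropPoly n d) (f : Fin (n + 1) → ℝ → ℝ) (x : ℝ) : ℝ :=
  d * tmax (fun k => f k x) + d * P.coeffNorm - P.compo f x

/-- proximity function m_f(r, V_P). -/
def proxCurve {n d : ℕ} (f : Fin (n + 1) → ℝ → ℝ) (P : TropPoly n d) (r : ℝ) : ℝ :=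
  (weil P f r + weil P f (-r)) / 2

/-- f is tropical algebraically nondegenerate. -/
def AlgNondeg {n : ℕ} (f : Fin (n + 1) → ℝ → ℝ) : Prop :=
  ∀ d : ℕ, 1 ≤ d → ∀ P : TropPoly n d, ∃ t : ℝ, (fun k => f k t) ∉ P.hyp

/-- f is tropical linearly nondegenerate. -/
def LinNondeg {n : ℕ} (f : Fin (n + 1) → ℝ → ℝ) : Prop :=
  ∀ P : TropPoly n 1, ∃ t : ℝ, (fun k => f k t) ∉ P.hyp

/-- Gondran–Minoux linear independence of a finite family of real functions. -/
def GMLinIndep {ι : Type*} [Fintype ι] [DecidableEq ι] (g : ι → ℝ → ℝ) : Prop :=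
  ¬ ∃ (I J : Finset ι) (a : ι → EReal),
      I.Nonempty ∧ J.Nonempty ∧ Disjoint I J ∧ I ∪ J = Finset.univ ∧
      (∃ i, a i ≠ ⊥) ∧
      ∀ x : ℝ, (I.sup fun i => a i + ((g i x : ℝ) : EReal)) =
        (J.sup fun j => a j + ((g j x : ℝ) : EReal))

/-- the degree-d tropical monomials f^I in f₀,…,f_n. -/
def monos {n : ℕ} (f : Fin (n + 1) → ℝ → ℝ) (d : ℕ) :
    Sym (Fin (n + 1)) d → ℝ → ℝ :=
  fun s x => (Multiset.map (fun k => f k x) (s : Multiset (Fin (n + 1)))).sum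

/-- Gondran–Minoux algebraic independence. -/
def GMAlgIndep {n : ℕ} (f : Fin (n + 1) → ℝ → ℝ) : Prop :=
  ∀ d : ℕ, 1 ≤ d → GMLinIndep (monos f d)

/-- F is a complete tropical linear combination of the family h :
every tropical-linear representation of F over h has all coefficients finite. -/
def TropComplete {ι : Type*} [Fintype ι] (h : ι → ℝ → ℝ) (F : ℝ → ℝ) : Prop :=
  ∀ a : ι → EReal,
    (∀ x : ℝ, ((F x : ℝ) : EReal) = Finset.univ.sup fun k => a k + ((h k x : ℝ) : EReal)) →
    ∀ k, a k ≠ ⊥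

/-- the tropical Casoratian with shift c. -/
def casorati {m : ℕ} (c : ℝ) (g : Fin (m + 1) → ℝ → ℝ) : ℝ → ℝ := fun x =>
  Finset.univ.sup' Finset.univ_nonempty
    fun π : Equiv.Perm (Fin (m + 1)) => ∑ j, g j (x + ((π j : ℕ) : ℝ) * c)

/-- tropical Cartan characteristic for a reduced representation [f₀:f₁] in TP¹. -/
def charT2 (f0 f1 : ℝ → ℝ) (r : ℝ) : ℝ :=
  (max (f0 r) (f1 r) + max (f0 (-r)) (f1 (-r))) / 2 - max (f0 0) (f1 0)

/-- reduced representation in TP¹: f₀, f₁ tropical entire with no common roots. -/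
def ReducedPair (f0 f1 : ℝ → ℝ) : Prop :=
  IsTropEntire f0 ∧ IsTropEntire f1 ∧ ∀ x : ℝ, ¬ (0 < omega f0 x ∧ 0 < omega f1 x)

/-- (P∘f)(x) = max(a₀+f₀(x), a₁+f₁(x)) for a TP¹ value [a₁:a₀]. -/
def pcomp (a0 a1 : EReal) (f0 f1 : ℝ → ℝ) : ℝ → ℝ := fun x =>
  ((a0 + ((f0 x : ℝ) : EReal)) ⊔ (a1 + ((f1 x : ℝ) : EReal))).toReal

/-- defect of a tropical holomorphic curve with respect to a tropical hypersurface. -/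
def curveDefect {n d : ℕ} (f : Fin (n + 1) → ℝ → ℝ) (P : TropPoly n d) : ℝ :=
  1 - Filter.limsup (fun r => countNroots (P.compo f) r / (d * curveT f r)) atTop

end TropNev

end

open TropNev Filter MeasureTheory Topology

set_option maxHeartbeats 1000000

noncomputable section
namespace TropNev

-- affine value lemmas
lemma hasDerivWithinAt_Ici_of_affine {h : ℝ → ℝ} {x v c s : ℝ} (hv : x < v)
    (aff : ∀ t ∈ Set.Icc x v, h t = c + s * t) :
    HasDerivWithinAt h s (Set.Ici x) x := by
  have hg : HasDerivWithinAt (fun t => c + s * t) s (Set.Ici x) x := by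
    simpa using (((hasDerivAt_id x).const_mul s).const_add c).hasDerivWithinAt
  refine hg.congr_of_eventuallyEq ?_ (aff x ⟨le_rfl, hv.le⟩)
  filter_upwards [Icc_mem_nhdsGE_of_mem (⟨le_rfl, hv⟩ : x ∈ Set.Ico x v)] with t ht
  exact aff t ht

lemma hasDerivWithinAt_Iic_of_affine {h : ℝ → ℝ} {u x c s : ℝ} (hu : u < x)
    (aff : ∀ t ∈ Set.Icc u x, h t = c + s * t) :
    HasDerivWithinAt h s (Set.Iic x) x := by
  have hg : HasDerivWithinAt (fun t => c + s * t) s (Set.Iic x) x := by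
    simpa using (((hasDerivAt_id x).const_mul s).const_add c).hasDerivWithinAt
  refine hg.congr_of_eventuallyEq ?_ (aff x ⟨hu.le, le_rfl⟩)
  filter_upwards [Icc_mem_nhdsLE_of_mem (⟨hu, le_rfl⟩ : x ∈ Set.Ioc u x)] with t ht
  exact aff t ht

lemma dR_eq {h : ℝ → ℝ} {x v c s : ℝ} (hv : x < v)
    (aff : ∀ t ∈ Set.Icc x v, h t = c + s * t) :
    derivWithin h (Set.Ici x) x = s :=
  (hasDerivWithinAt_Ici_of_affine hv aff).derivWithin (uniqueDiffOn_Ici x x Set.self_mem_Ici)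

lemma dL_eq {h : ℝ → ℝ} {u x c s : ℝ} (hu : u < x)
    (aff : ∀ t ∈ Set.Icc u x, h t = c + s * t) :
    derivWithin h (Set.Iic x) x = s :=
  (hasDerivWithinAt_Iic_of_affine hu aff).derivWithin (uniqueDiffOn_Iic x x Set.self_mem_Iic)

lemma interior_dR {h : ℝ → ℝ} {u v c s : ℝ}
    (aff : ∀ t ∈ Set.Icc u v, h t = c + s * t) {y : ℝ} (hy : y ∈ Set.Ioo u v) :
    derivWithin h (Set.Ici y) y = s :=
  dR_eq hy.2 fun t ht => aff t ⟨le_trans hy.1.le ht.1, ht.2⟩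

lemma interior_dL {h : ℝ → ℝ} {u v c s : ℝ}
    (aff : ∀ t ∈ Set.Icc u v, h t = c + s * t) {y : ℝ} (hy : y ∈ Set.Ioo u v) :
    derivWithin h (Set.Iic y) y = s :=
  dL_eq hy.1 fun t ht => aff t ⟨ht.1, le_trans ht.2 hy.2.le⟩

lemma omega_eq_zero_of_affine {h : ℝ → ℝ} {u v c s : ℝ}
    (aff : ∀ t ∈ Set.Icc u v, h t = c + s * t) {y : ℝ} (hy : y ∈ Set.Ioo u v) :
    omega h y = 0 := by
  rw [omega, interior_dR aff hy, interior_dL aff hy, sub_self]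

/-- packaged slope data -/
lemma slopes {h : ℝ → ℝ} (hm : IsTropMero h) (x : ℝ) :
    ∃ ε > (0:ℝ),
      (∀ t ∈ Set.Icc x (x + ε), h t = (h x - derivWithin h (Set.Ici x) x * x) + derivWithin h (Set.Ici x) x * t) ∧
      (∀ t ∈ Set.Icc (x - ε) x, h t = (h x - derivWithin h (Set.Iic x) x * x) + derivWithin h (Set.Iic x) x * t) := by
  obtain ⟨ε, hε, sR, sL, hR, hL⟩ := hm.2 x
  have hR' : ∀ t ∈ Set.Icc x (x + ε), h t = (h x - sR * x) + sR * t := by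
    intro t ht; rw [hR t ht]; ring
  have hL' : ∀ t ∈ Set.Icc (x - ε) x, h t = (h x - sL * x) + sL * t := by
    intro t ht; rw [hL t ht]; ring
  have e1 : derivWithin h (Set.Ici x) x = sR := dR_eq (by linarith) hR'
  have e2 : derivWithin h (Set.Iic x) x = sL := dL_eq (by linarith) hL'
  exact ⟨ε, hε, by rw [e1]; exact hR', by rw [e2]; exact hL'⟩

-- finiteness of breakpoints in a compact interval
lemma finite_breaks {h : ℝ → ℝ} (hm : IsTropMero h) (u v : ℝ) :
    {x : ℝ | x ∈ Set.Icc u v ∧ omega h x ≠ 0}.Finite := by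
  by_contra hinf
  have hinf' : {x : ℝ | x ∈ Set.Icc u v ∧ omega h x ≠ 0}.Infinite := hinf
  obtain ⟨y, -, hacc⟩ := hinf'.exists_accPt_of_subset_isCompact isCompact_Icc
    (fun z hz => hz.1)
  obtain ⟨ε, hε, repR, repL⟩ := slopes hm y
  have hV : Set.Ioo (y - ε) (y + ε) ∈ 𝓝[≠] y :=
    mem_nhdsWithin_of_mem_nhds (Ioo_mem_nhds (by linarith) (by linarith))
  have hne : (Set.Ioo (y - ε) (y + ε) ∩ ({y}ᶜ ∩ {x : ℝ | x ∈ Set.Icc u v ∧ omega h x ≠ 0})).Nonempty := by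
    haveI : (𝓝[≠] y ⊓ 𝓟 {x : ℝ | x ∈ Set.Icc u v ∧ omega h x ≠ 0}).NeBot := hacc
    refine Filter.nonempty_of_mem (f := 𝓝[≠] y ⊓ 𝓟 {x : ℝ | x ∈ Set.Icc u v ∧ omega h x ≠ 0})
      (Filter.inter_mem (Filter.mem_inf_of_left hV) ?_)
    exact Filter.inter_mem (Filter.mem_inf_of_left self_mem_nhdsWithin)
      (Filter.mem_inf_of_right (Filter.mem_principal_self _))
  obtain ⟨z, hz1, hz2, hz3, hz4⟩ := hne
  rcases lt_or_gt_of_ne (show z ≠ y from hz2) with hlt | hgt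
  · exact hz4 (omega_eq_zero_of_affine repL ⟨hz1.1, hlt⟩)
  · exact hz4 (omega_eq_zero_of_affine repR ⟨hgt, hz1.2⟩)

-- omega of negation
lemma isTropMero_neg {h : ℝ → ℝ} (hm : IsTropMero h) : IsTropMero (fun x => -h x) := by
  refine ⟨hm.1.neg, fun x => ?_⟩
  obtain ⟨ε, hε, sR, sL, hR, hL⟩ := hm.2 x
  exact ⟨ε, hε, -sR, -sL, fun t ht => by show -h t = -h x + -sR*(t-x); rw [hR t ht]; ring,
    fun t ht => by show -h t = -h x + -sL*(t-x); rw [hL t ht]; ring⟩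

lemma omega_neg {h : ℝ → ℝ} (hm : IsTropMero h) (x : ℝ) :
    omega (fun y => -h y) x = - omega h x := by
  obtain ⟨ε, hε, repR, repL⟩ := slopes hm x
  have e1 : derivWithin (fun y => -h y) (Set.Ici x) x = -derivWithin h (Set.Ici x) x :=
    dR_eq (v := x + ε) (by linarith) (c := -(h x - derivWithin h (Set.Ici x) x * x))
      (fun t ht => by show -h t = _; rw [repR t ht]; ring)
  have e2 : derivWithin (fun y => -h y) (Set.Iic x) x = -derivWithin h (Set.Iic x) x :=
    dL_eq (u := x - ε) (by linarith) (c := -(h x - derivWithin h (Set.Iic x) x * x))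
      (fun t ht => by show -h t = _; rw [repL t ht]; ring)
  rw [omega, omega, e1, e2]; ring

-- reflection
lemma isTropMero_reflect {h : ℝ → ℝ} (hm : IsTropMero h) : IsTropMero (fun x => h (-x)) := by
  refine ⟨hm.1.comp continuous_neg, fun x => ?_⟩
  obtain ⟨ε, hε, sR, sL, hR, hL⟩ := hm.2 (-x)
  refine ⟨ε, hε, -sL, -sR, fun t ht => ?_, fun t ht => ?_⟩
  · have h2 : -t ∈ Set.Icc (-x - ε) (-x) := ⟨by linarith [ht.2], by linarith [ht.1]⟩
    show h (-t) = h (-x) + -sL * (t - x); rw [hL (-t) h2]; ring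
  · have h2 : -t ∈ Set.Icc (-x) (-x + ε) := ⟨by linarith [ht.2], by linarith [ht.1]⟩
    show h (-t) = h (-x) + -sR * (t - x); rw [hR (-t) h2]; ring

lemma dR_reflect {h : ℝ → ℝ} (hm : IsTropMero h) (x : ℝ) :
    derivWithin (fun y => h (-y)) (Set.Ici x) x = - derivWithin h (Set.Iic (-x)) (-x) := by
  obtain ⟨ε, hε, -, repL⟩ := slopes hm (-x)
  set s := derivWithin h (Set.Iic (-x)) (-x)
  refine dR_eq (v := x + ε) (by linarith) (c := h (-x) - s * (-x)) (fun t ht => ?_)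
  have h2 : -t ∈ Set.Icc (-x - ε) (-x) := ⟨by linarith [ht.2], by linarith [ht.1]⟩
  show h (-t) = _; rw [repL (-t) h2]; ring

lemma omega_reflect {h : ℝ → ℝ} (hm : IsTropMero h) (x : ℝ) :
    omega (fun y => h (-y)) x = omega h (-x) := by
  obtain ⟨ε, hε, repR, repL⟩ := slopes hm (-x)
  set sR := derivWithin h (Set.Ici (-x)) (-x)
  set sL := derivWithin h (Set.Iic (-x)) (-x)
  have e1 : derivWithin (fun y => h (-y)) (Set.Ici x) x = -sL := by
    refine dR_eq (v := x + ε) (by linarith) (c := h (-x) - sL * (-x)) (fun t ht => ?_)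
    have h2 : -t ∈ Set.Icc (-x - ε) (-x) := ⟨by linarith [ht.2], by linarith [ht.1]⟩
    show h (-t) = _; rw [repL (-t) h2]; ring
  have e2 : derivWithin (fun y => h (-y)) (Set.Iic x) x = -sR := by
    refine dL_eq (u := x - ε) (by linarith) (c := h (-x) - sR * (-x)) (fun t ht => ?_)
    have h2 : -t ∈ Set.Icc (-x) (-x + ε) := ⟨by linarith [ht.2], by linarith [ht.1]⟩
    show h (-t) = _; rw [repR (-t) h2]; ring
  rw [omega, omega, e1, e2]; ring

/-- entire closed under adding a constant. -/
lemma isTropEntire_const_add {f : ℝ → ℝ} (hf : IsTropEntire f) (c : ℝ) :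
    IsTropEntire (fun x => c + f x) := by
  constructor
  · refine ⟨continuous_const.add hf.1.1, fun x => ?_⟩
    obtain ⟨ε, hε, sR, sL, hR, hL⟩ := hf.1.2 x
    exact ⟨ε, hε, sR, sL,
      fun t ht => by show c + f t = c + f x + sR * (t - x); rw [hR t ht]; ring,
      fun t ht => by show c + f t = c + f x + sL * (t - x); rw [hL t ht]; ring⟩
  · intro x
    obtain ⟨ε, hε, repR, repL⟩ := slopes hf.1 x
    set sR := derivWithin f (Set.Ici x) x
    set sL := derivWithin f (Set.Iic x) x
    have e1 : derivWithin (fun y => c + f y) (Set.Ici x) x = sR :=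
      dR_eq (v := x + ε) (by linarith) (c := c + (f x - sR * x))
        (fun t ht => by show c + f t = _; rw [repR t ht]; ring)
    have e2 : derivWithin (fun y => c + f y) (Set.Iic x) x = sL :=
      dL_eq (u := x - ε) (by linarith) (c := c + (f x - sL * x))
        (fun t ht => by show c + f t = _; rw [repL t ht]; ring)
    have := hf.2 x
    rw [omega] at this ⊢
    rw [e1, e2]; exact this

/-- subtracting an affine function preserves mero, keeps omega. -/
lemma isTropMero_sub_affine {f : ℝ → ℝ} (hf : IsTropMero f) (A B : ℝ) :
    IsTropMero (fun x => f x - (A + B * x)) := by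
  refine ⟨hf.1.sub (by continuity), fun x => ?_⟩
  obtain ⟨ε, hε, sR, sL, hR, hL⟩ := hf.2 x
  exact ⟨ε, hε, sR - B, sL - B,
    fun t ht => by show f t - (A + B * t) = f x - (A + B * x) + (sR - B) * (t - x); rw [hR t ht]; ring,
    fun t ht => by show f t - (A + B * t) = f x - (A + B * x) + (sL - B) * (t - x); rw [hL t ht]; ring⟩

lemma omega_sub_affine {f : ℝ → ℝ} (hf : IsTropMero f) (A B x : ℝ) :
    omega (fun y => f y - (A + B * y)) x = omega f x := by
  obtain ⟨ε, hε, repR, repL⟩ := slopes hf x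
  set sR := derivWithin f (Set.Ici x) x
  set sL := derivWithin f (Set.Iic x) x
  have e1 : derivWithin (fun y => f y - (A + B * y)) (Set.Ici x) x = sR - B :=
    dR_eq (v := x + ε) (by linarith) (c := f x - sR * x - A)
      (fun t ht => by show f t - (A + B * t) = _; rw [repR t ht]; ring)
  have e2 : derivWithin (fun y => f y - (A + B * y)) (Set.Iic x) x = sL - B :=
    dL_eq (u := x - ε) (by linarith) (c := f x - sL * x - A)
      (fun t ht => by show f t - (A + B * t) = _; rw [repL t ht]; ring)
  rw [omega, omega, e1, e2]; ring

/-- pointwise max of entire functions is entire. -/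
lemma isTropEntire_max {f g : ℝ → ℝ} (hf : IsTropEntire f) (hg : IsTropEntire g) :
    IsTropEntire (fun x => max (f x) (g x)) := by
  have key : ∀ x : ℝ, ∃ ε > (0:ℝ), ∃ sR sL : ℝ, 0 ≤ sR - sL ∧
      (∀ t ∈ Set.Icc x (x + ε), max (f t) (g t) = max (f x) (g x) + sR * (t - x)) ∧
      (∀ t ∈ Set.Icc (x - ε) x, max (f t) (g t) = max (f x) (g x) + sL * (t - x)) := by
    intro x
    obtain ⟨εf, hεf, repRf, repLf⟩ := slopes hf.1 x
    obtain ⟨εg, hεg, repRg, repLg⟩ := slopes hg.1 x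
    set Rf := derivWithin f (Set.Ici x) x
    set Lf := derivWithin f (Set.Iic x) x
    set Rg := derivWithin g (Set.Ici x) x
    set Lg := derivWithin g (Set.Iic x) x
    rcases lt_trichotomy (f x) (g x) with hlt | heq | hgt
    · -- g bigger near x
      have hcont : Continuous (fun t => g t - f t) := hg.1.1.sub hf.1.1
      have : ∀ᶠ t in 𝓝 x, 0 < g t - f t :=
        (hcont.tendsto x).eventually (eventually_gt_nhds (by linarith))
      obtain ⟨δ0, hδ0, hball⟩ := Metric.eventually_nhds_iff_ball.1 this
      set ε := min (min εf εg) (δ0 / 2) with hεdef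
      have hε : 0 < ε := by positivity
      have hle1 : ε ≤ εf := le_trans (min_le_left _ _) (min_le_left _ _)
      have hle2 : ε ≤ εg := le_trans (min_le_left _ _) (min_le_right _ _)
      have hle3 : ε ≤ δ0 / 2 := min_le_right _ _
      refine ⟨ε, hε, Rg, Lg, hg.2 x, fun t ht => ?_, fun t ht => ?_⟩
      · have hb : t ∈ Metric.ball x δ0 := by
          rw [Metric.mem_ball, Real.dist_eq, abs_lt]
          constructor <;> linarith [ht.1, ht.2]
        have h4 : f t < g t := by linarith [hball t hb]
        rw [max_eq_right h4.le, max_eq_right hlt.le, repRg t ⟨ht.1, by linarith [ht.2]⟩]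
        ring
      · have hb : t ∈ Metric.ball x δ0 := by
          rw [Metric.mem_ball, Real.dist_eq, abs_lt]
          constructor <;> linarith [ht.1, ht.2]
        have h4 : f t < g t := by linarith [hball t hb]
        rw [max_eq_right h4.le, max_eq_right hlt.le, repLg t ⟨by linarith [ht.1], ht.2⟩]
        ring
    · -- equal values
      set ε := min εf εg
      have hε : 0 < ε := lt_min hεf hεg
      refine ⟨ε, hε, max Rf Rg, min Lf Lg, ?_, fun t ht => ?_, fun t ht => ?_⟩
      · have h1 := hf.2 x; have h2 := hg.2 x
        rw [omega] at h1 h2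
        have : Lf ≤ Rf := by linarith
        calc (0:ℝ) ≤ Rf - Lf := by linarith
          _ ≤ max Rf Rg - min Lf Lg := by
              have := le_max_left Rf Rg; have := min_le_left Lf Lg; linarith
      · have htf := repRf t ⟨ht.1, le_trans ht.2 (by linarith [min_le_left εf εg])⟩
        have htg := repRg t ⟨ht.1, le_trans ht.2 (by linarith [min_le_right εf εg])⟩
        have hd : 0 ≤ t - x := by linarith [ht.1]
        rw [htf, htg]
        rcases le_total Rf Rg with hc | hc
        · rw [max_eq_right (by nlinarith [heq]), max_eq_right hc, max_eq_right heq.le]; ring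
        · rw [max_eq_left (by nlinarith [heq]), max_eq_left hc, max_eq_right heq.le]
          rw [heq]; ring
      · have htf := repLf t ⟨le_trans (by linarith [min_le_left εf εg]) ht.1, ht.2⟩
        have htg := repLg t ⟨le_trans (by linarith [min_le_right εf εg]) ht.1, ht.2⟩
        have hd : t - x ≤ 0 := by linarith [ht.2]
        rw [htf, htg]
        rcases le_total Lf Lg with hc | hc
        · rw [max_eq_left (by nlinarith [heq]), min_eq_left hc, max_eq_right heq.le]
          rw [heq]; ring
        · rw [max_eq_right (by nlinarith [heq]), min_eq_right hc, max_eq_right heq.le]; ring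
    · -- f bigger near x
      have hcont : Continuous (fun t => f t - g t) := hf.1.1.sub hg.1.1
      have : ∀ᶠ t in 𝓝 x, 0 < f t - g t :=
        (hcont.tendsto x).eventually (eventually_gt_nhds (by linarith))
      obtain ⟨δ0, hδ0, hball⟩ := Metric.eventually_nhds_iff_ball.1 this
      set ε := min (min εf εg) (δ0 / 2) with hεdef
      have hε : 0 < ε := by positivity
      have hle1 : ε ≤ εf := le_trans (min_le_left _ _) (min_le_left _ _)
      have hle2 : ε ≤ εg := le_trans (min_le_left _ _) (min_le_right _ _)
      have hle3 : ε ≤ δ0 / 2 := min_le_right _ _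
      refine ⟨ε, hε, Rf, Lf, hf.2 x, fun t ht => ?_, fun t ht => ?_⟩
      · have hb : t ∈ Metric.ball x δ0 := by
          rw [Metric.mem_ball, Real.dist_eq, abs_lt]
          constructor <;> linarith [ht.1, ht.2]
        have h4 : g t < f t := by linarith [hball t hb]
        rw [max_eq_left h4.le, max_eq_left hgt.le, repRf t ⟨ht.1, by linarith [ht.2]⟩]
        ring
      · have hb : t ∈ Metric.ball x δ0 := by
          rw [Metric.mem_ball, Real.dist_eq, abs_lt]
          constructor <;> linarith [ht.1, ht.2]
        have h4 : g t < f t := by linarith [hball t hb]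
        rw [max_eq_left h4.le, max_eq_left hgt.le, repLf t ⟨by linarith [ht.1], ht.2⟩]
        ring
  constructor
  · exact ⟨hf.1.1.max hg.1.1, fun x => by
      obtain ⟨ε, hε, sR, sL, -, hR, hL⟩ := key x
      exact ⟨ε, hε, sR, sL, hR, hL⟩⟩
  · intro x
    obtain ⟨ε, hε, sR, sL, hs, hR, hL⟩ := key x
    have e1 : derivWithin (fun y => max (f y) (g y)) (Set.Ici x) x = sR :=
      dR_eq (v := x + ε) (by linarith) (c := max (f x) (g x) - sR * x)
        (fun t ht => by show max (f t) (g t) = _; rw [hR t ht]; ring)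
    have e2 : derivWithin (fun y => max (f y) (g y)) (Set.Iic x) x = sL :=
      dL_eq (u := x - ε) (by linarith) (c := max (f x) (g x) - sL * x)
        (fun t ht => by show max (f t) (g t) = _; rw [hL t ht]; ring)
    rw [omega, e1, e2]; exact hs

/-- gap around a point avoiding a finite set on the right/left -/
lemma exists_gap_right (B : Finset ℝ) (x : ℝ) :
    ∃ δ > (0:ℝ), ∀ b ∈ B, b ≤ x ∨ x + δ ≤ b := by
  classical
  set B' := B.filter (fun b => x < b) with hB'
  rcases B'.eq_empty_or_nonempty with he | hne
  · refine ⟨1, one_pos, fun b hb => ?_⟩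
    by_contra hcon
    push_neg at hcon
    have : b ∈ B' := Finset.mem_filter.2 ⟨hb, by linarith [hcon.1, hcon.2]⟩
    simp [he] at this
  · refine ⟨B'.min' hne - x, ?_, fun b hb => ?_⟩
    · have := (Finset.mem_filter.1 (B'.min'_mem hne)).2
      linarith
    · rcases le_or_gt b x with h | h
      · exact Or.inl h
      · right
        have : b ∈ B' := Finset.mem_filter.2 ⟨hb, h⟩
        linarith [B'.min'_le b this]

lemma exists_gap_left (B : Finset ℝ) (x : ℝ) :
    ∃ δ > (0:ℝ), ∀ b ∈ B, x ≤ b ∨ b ≤ x - δ := by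
  classical
  set B' := B.filter (fun b => b < x) with hB'
  rcases B'.eq_empty_or_nonempty with he | hne
  · refine ⟨1, one_pos, fun b hb => ?_⟩
    by_contra hcon
    push_neg at hcon
    have : b ∈ B' := Finset.mem_filter.2 ⟨hb, by linarith [hcon.1, hcon.2]⟩
    simp [he] at this
  · refine ⟨x - B'.max' hne, ?_, fun b hb => ?_⟩
    · have := (Finset.mem_filter.1 (B'.max'_mem hne)).2
      linarith
    · rcases le_or_gt x b with h | h
      · exact Or.inl h
      · right
        have : b ∈ B' := Finset.mem_filter.2 ⟨hb, h⟩
        linarith [B'.le_max' b this]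

/-- right-derivative step formula. -/
lemma dR_const_on {h : ℝ → ℝ} (hm : IsTropMero h) {u v : ℝ} (huv : u < v) (B : Finset ℝ)
    (hB1 : ∀ b ∈ B, b ∈ Set.Ioo u v)
    (hB2 : ∀ x ∈ Set.Ioo u v, omega h x ≠ 0 → x ∈ B) :
    ∀ t ∈ Set.Ico u v,
      derivWithin h (Set.Ici t) t
        = derivWithin h (Set.Ici u) u + ∑ b ∈ B, (if b ≤ t then omega h b else 0) := by
  classical
  set S : ℝ → ℝ := fun t => ∑ b ∈ B, (if b ≤ t then omega h b else 0) with hS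
  set g : ℝ → ℝ := fun t => derivWithin h (Set.Ici t) t - S t with hg
  -- right local constancy
  have claimR : ∀ x, u ≤ x → x < v → ∃ δ > (0:ℝ),
      x + δ ≤ v ∧ ∀ t, x ≤ t → t < x + δ → g t = g x := by
    intro x hux hxv
    obtain ⟨ε, hε, repR, -⟩ := slopes hm x
    obtain ⟨δ0, hδ0, hgap⟩ := exists_gap_right B x
    refine ⟨min (min ε δ0) (v - x), lt_min (lt_min hε hδ0) (by linarith), by
        have := min_le_right (min ε δ0) (v - x); linarith, fun t ht1 ht2 => ?_⟩
    have hle1 : min (min ε δ0) (v - x) ≤ ε := le_trans (min_le_left _ _) (min_le_left _ _)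
    have hle2 : min (min ε δ0) (v - x) ≤ δ0 := le_trans (min_le_left _ _) (min_le_right _ _)
    have hSeq : S t = S x := by
      refine Finset.sum_congr rfl fun b hb => ?_
      rcases hgap b hb with hbl | hbr
      · simp [hbl, le_trans hbl ht1]
      · have h1 : ¬ b ≤ t := by linarith
        have h2 : ¬ b ≤ x := by linarith
        simp [h1, h2]
    rcases eq_or_lt_of_le ht1 with rfl | hlt
    · rfl
    · have hdr : derivWithin h (Set.Ici t) t = derivWithin h (Set.Ici x) x :=
        interior_dR repR ⟨hlt, by linarith⟩
      simp only [hg, hdr, hSeq]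
  -- left local constancy
  have claimL : ∀ x, u < x → x < v → ∃ δ > (0:ℝ),
      ∀ t, x - δ < t → t < x → g t = g x := by
    intro x hux hxv
    obtain ⟨ε, hε, -, repL⟩ := slopes hm x
    obtain ⟨δ0, hδ0, hgap⟩ := exists_gap_left B x
    refine ⟨min ε δ0, lt_min hε hδ0, fun t ht1 ht2 => ?_⟩
    have hle1 : min ε δ0 ≤ ε := min_le_left _ _
    have hle2 : min ε δ0 ≤ δ0 := min_le_right _ _
    have hdr : derivWithin h (Set.Ici t) t = derivWithin h (Set.Iic x) x :=
      interior_dR repL ⟨by linarith, ht2⟩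
    have hSeq : S x - S t = (if x ∈ B then omega h x else 0) := by
      rw [hS]
      simp only
      rw [← Finset.sum_sub_distrib,
        show (if x ∈ B then omega h x else 0) = ∑ b ∈ B, if b = x then omega h b else 0 from
          (Finset.sum_ite_eq' B x (fun b => omega h b)).symm]
      refine Finset.sum_congr rfl fun b hb => ?_
      rcases hgap b hb with hxb | hbl
      · rcases eq_or_lt_of_le hxb with heq | hlt
        · subst heq
          simp [le_refl, (show ¬ x ≤ t by linarith)]
        · simp [(show ¬ b ≤ x by linarith), (show ¬ b ≤ t by linarith),
            (show ¬ b = x by intro hc; subst hc; linarith)]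
      · have hbt : b ≤ t := by linarith
        simp [le_trans hbl (by linarith : x - δ0 ≤ x), hbt,
          (show ¬ b = x by intro hc; subst hc; linarith)]
    have hdRx : derivWithin h (Set.Ici x) x
        = derivWithin h (Set.Iic x) x + (if x ∈ B then omega h x else 0) := by
      by_cases hxB : x ∈ B
      · simp only [hxB, if_true, omega]; ring
      · have : omega h x = 0 := by
          by_contra hne
          exact hxB (hB2 x ⟨hux, hxv⟩ hne)
        rw [omega] at this
        simp only [hxB, if_false]
        linarith
    simp only [hg, hdr, hdRx]
    linarith [hSeq]
  -- main argument via constancy of g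
  intro t ht
  have hgt : g t = g u := by
    set v' := (t + v) / 2 with hv'
    have htv' : t < v' := by simp only [hv']; linarith [ht.2]
    have hv'v : v' < v := by simp only [hv']; linarith [ht.2]
    have huv' : u < v' := lt_of_le_of_lt ht.1 htv'
    have hderiv : ∀ x ∈ Set.Ico u v', HasDerivWithinAt g 0 (Set.Ici x) x := by
      intro x hx
      obtain ⟨δ, hδ, -, hconst⟩ := claimR x hx.1 (lt_trans hx.2 hv'v)
      have ev : g =ᶠ[𝓝[Set.Ici x] x] fun _ => g x := by
        filter_upwards [Ico_mem_nhdsGE_of_mem (⟨le_rfl, by linarith⟩ : x ∈ Set.Ico x (x + δ))]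
          with t' ht'
        exact hconst t' ht'.1 ht'.2
      exact (hasDerivWithinAt_const x _ (g x)).congr_of_eventuallyEq ev rfl
    have hcont : ContinuousOn g (Set.Icc u v') := by
      intro x hx
      have hsub : Set.Icc u v' ⊆ (Set.Icc u v' ∩ Set.Iio x) ∪ Set.Ici x := by
        intro t' ht'
        rcases lt_or_ge t' x with hlt | hge
        · exact Or.inl ⟨ht', hlt⟩
        · exact Or.inr hge
      have hmono : 𝓝[Set.Icc u v'] x ≤ 𝓝[Set.Icc u v' ∩ Set.Iio x] x ⊔ 𝓝[Set.Ici x] x := by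
        rw [← nhdsWithin_union]
        exact nhdsWithin_mono x hsub
      have evR : ∀ᶠ t' in 𝓝[Set.Ici x] x, g t' = g x := by
        obtain ⟨δ, hδ, -, hconst⟩ := claimR x hx.1 (lt_of_le_of_lt hx.2 hv'v)
        filter_upwards [Ico_mem_nhdsGE_of_mem (⟨le_rfl, by linarith⟩ : x ∈ Set.Ico x (x + δ))]
          with t' ht'
        exact hconst t' ht'.1 ht'.2
      have evL : ∀ᶠ t' in 𝓝[Set.Icc u v' ∩ Set.Iio x] x, g t' = g x := by
        rcases eq_or_lt_of_le hx.1 with heq | hux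
        · have hempty : Set.Icc u v' ∩ Set.Iio x = ∅ := by
            ext t'
            simp only [Set.mem_inter_iff, Set.mem_Icc, Set.mem_Iio, Set.mem_empty_iff_false,
              iff_false]
            rintro ⟨⟨h1, -⟩, h2⟩
            rw [← heq] at h2
            linarith
          rw [hempty, nhdsWithin_empty]
          exact Filter.eventually_bot
        · obtain ⟨δ, hδ, hconst⟩ := claimL x hux (lt_of_le_of_lt hx.2 hv'v)
          have : ∀ᶠ t' in 𝓝[Set.Iio x] x, g t' = g x := by
            filter_upwards [Ioo_mem_nhdsLT_of_mem
              (⟨by linarith, le_rfl⟩ : x ∈ Set.Ioc (x - δ) x)] with t' ht'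
            exact hconst t' ht'.1 ht'.2
          exact this.filter_mono (nhdsWithin_mono x Set.inter_subset_right)
      have ev : ∀ᶠ t' in 𝓝[Set.Icc u v'] x, g t' = g x :=
        (Filter.eventually_sup.2 ⟨evL, evR⟩).filter_mono hmono
      exact (tendsto_const_nhds.congr' (ev.mono fun _ hh => hh.symm) : _)
    exact constant_of_has_deriv_right_zero hcont hderiv t ⟨ht.1, htv'.le⟩
  have hSu : S u = 0 := by
    refine Finset.sum_eq_zero fun b hb => ?_
    have := hB1 b hb
    simp [show ¬ b ≤ u by linarith [this.1]]
  have : derivWithin h (Set.Ici t) t - S t = derivWithin h (Set.Ici u) u - S u := hgt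
  rw [hSu] at this
  simp only [hS] at this ⊢
  linarith

/-- the fundamental value formula. -/
lemma value_formula {h : ℝ → ℝ} (hm : IsTropMero h) {u v : ℝ} (huv : u < v) (B : Finset ℝ)
    (hB1 : ∀ b ∈ B, b ∈ Set.Ioo u v)
    (hB2 : ∀ x ∈ Set.Ioo u v, omega h x ≠ 0 → x ∈ B) :
    h v = h u + derivWithin h (Set.Ici u) u * (v - u) + ∑ b ∈ B, omega h b * (v - b) := by
  classical
  set σ : ℝ → ℝ := fun t =>
    derivWithin h (Set.Ici u) u + ∑ b ∈ B, Set.indicator (Set.Ici b) (fun _ => omega h b) t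
    with hσ
  have hind : ∀ b t : ℝ, Set.indicator (Set.Ici b) (fun _ : ℝ => omega h b) t
      = if b ≤ t then omega h b else 0 := by
    intro b t
    by_cases hb : b ≤ t
    · rw [Set.indicator_of_mem (Set.mem_Ici.2 hb), if_pos hb]
    · rw [Set.indicator_of_notMem (fun hc => hb (Set.mem_Ici.1 hc)), if_neg hb]
  have hint1 : ∀ b ∈ B, IntervalIntegrable
      (fun t => Set.indicator (Set.Ici b) (fun _ : ℝ => omega h b) t) volume u v := by
    intro b _
    constructor
    · exact (integrableOn_const measure_Ioc_lt_top.ne).indicator measurableSet_Ici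
    · rw [Set.Ioc_eq_empty (by linarith)]
      exact integrableOn_empty
  have hsum : IntervalIntegrable
      (fun t => ∑ b ∈ B, Set.indicator (Set.Ici b) (fun _ : ℝ => omega h b) t) volume u v := by
    have h2 := IntervalIntegrable.sum B hint1
    have : (∑ b ∈ B, fun t => Set.indicator (Set.Ici b) (fun _ : ℝ => omega h b) t)
        = fun t => ∑ b ∈ B, Set.indicator (Set.Ici b) (fun _ : ℝ => omega h b) t := by
      funext t
      simp [Finset.sum_apply]
    rwa [this] at h2
  have hint : IntervalIntegrable σ volume u v :=
    (intervalIntegrable_const (c := derivWithin h (Set.Ici u) u)).add hsum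
  have hderiv : ∀ x ∈ Set.Ioo u v, HasDerivWithinAt h (σ x) (Set.Ioi x) x := by
    intro x hx
    have hσx : σ x = derivWithin h (Set.Ici x) x := by
      rw [hσ]
      simp only
      rw [Finset.sum_congr rfl (fun b _ => hind b x)]
      exact (dR_const_on hm huv B hB1 hB2 x ⟨hx.1.le, hx.2⟩).symm
    obtain ⟨ε, hε, repR, -⟩ := slopes hm x
    have : HasDerivWithinAt h (derivWithin h (Set.Ici x) x) (Set.Ici x) x :=
      hasDerivWithinAt_Ici_of_affine (by linarith) repR
    rw [hσx]
    exact this.mono Set.Ioi_subset_Ici_self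
  have hFTC := intervalIntegral.integral_eq_sub_of_hasDeriv_right_of_le huv.le
    (hm.1.continuousOn) hderiv hint
  -- compute the integral
  have hcomp : ∫ t in u..v, σ t
      = derivWithin h (Set.Ici u) u * (v - u) + ∑ b ∈ B, omega h b * (v - b) := by
    rw [hσ]
    simp only
    rw [intervalIntegral.integral_add (intervalIntegrable_const) hsum,
      intervalIntegral.integral_const, intervalIntegral.integral_finset_sum hint1]
    have : ∀ b ∈ B, (∫ t in u..v, Set.indicator (Set.Ici b) (fun _ : ℝ => omega h b) t)
        = omega h b * (v - b) := by
      intro b hb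
      obtain ⟨hub, hbv⟩ := hB1 b hb
      rw [intervalIntegral.integral_of_le huv.le, MeasureTheory.setIntegral_indicator
        measurableSet_Ici]
      have hset : Set.Ioc u v ∩ Set.Ici b = Set.Icc b v := by
        ext t
        simp only [Set.mem_inter_iff, Set.mem_Ioc, Set.mem_Ici, Set.mem_Icc]
        constructor
        · rintro ⟨⟨-, h2⟩, h3⟩; exact ⟨h3, h2⟩
        · rintro ⟨h1, h2⟩; exact ⟨⟨by linarith, h2⟩, h1⟩
      rw [hset, MeasureTheory.setIntegral_const, Real.volume_real_Icc_of_le (by linarith), smul_eq_mul]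
      ring
    rw [Finset.sum_congr rfl this, smul_eq_mul]
    ring
  rw [hcomp] at hFTC
  linarith

section Jensen
variable {h : ℝ → ℝ}

/-- the tsum integrand for roots of h -/
private def G (h : ℝ → ℝ) (r : ℝ) : ℝ → ℝ := fun b =>
  if |b| < r ∧ omega (fun x => -h x) b < 0 then -omega (fun x => -h x) b * (r - |b|) else 0

lemma G_eq (hm : IsTropMero h) (r b : ℝ) :
    G h r b = if |b| < r ∧ 0 < omega h b then omega h b * (r - |b|) else 0 := by
  rw [G, omega_neg hm b]
  by_cases hc : |b| < r ∧ 0 < omega h b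
  · rw [if_pos ⟨hc.1, by linarith [hc.2]⟩, if_pos hc, neg_neg]
  · rw [if_neg, if_neg hc]
    intro ⟨h1, h2⟩
    exact hc ⟨h1, by linarith⟩

lemma G_nonneg (hm : IsTropMero h) (r b : ℝ) : 0 ≤ G h r b := by
  rw [G_eq hm]
  by_cases hc : |b| < r ∧ 0 < omega h b
  · rw [if_pos hc]
    have := abs_nonneg b
    nlinarith [hc.1, hc.2]
  · rw [if_neg hc]

lemma G_support (hm : IsTropMero h) (r : ℝ) {b : ℝ}
    (hb : b ∉ (finite_breaks hm (-r) r).toFinset) : G h r b = 0 := by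
  rw [G_eq hm]
  refine if_neg fun hc => hb ?_
  rw [Set.Finite.mem_toFinset]
  exact ⟨⟨by linarith [abs_lt.1 hc.1], by linarith [abs_lt.1 hc.1, le_abs_self b]⟩,
        by linarith [hc.2]⟩

lemma G_summable (hm : IsTropMero h) (r : ℝ) : Summable (G h r) :=
  summable_of_ne_finset_zero (s := (finite_breaks hm (-r) r).toFinset)
    (fun b hb => G_support hm r hb)

lemma countNroots_eq_tsum (r : ℝ) : countNroots h r = (1/2) * ∑' b, G h r b := rfl

/-- Jensen's formula. -/
lemma jensen (he : IsTropEntire h) {r : ℝ} (hr : 0 < r) :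
    countNroots h r = (h r + h (-r)) / 2 - h 0 := by
  classical
  have hm := he.1
  set s := (finite_breaks hm (-r) r).toFinset with hs
  set sp := s.filter (fun b => 0 < b ∧ b < r) with hsp
  set sn := s.filter (fun b => -r < b ∧ b < 0) with hsn
  set t : Finset ℝ := insert 0 (sp ∪ sn) with ht
  -- tsum equals finite sum over t
  have hts : ∑' b, G h r b = ∑ b ∈ t, G h r b := by
    refine tsum_eq_sum fun b hb => ?_
    rw [G_eq hm]
    refine if_neg fun hc => hb ?_
    rw [ht]
    rcases lt_trichotomy b 0 with hneg | rfl | hpos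
    · refine Finset.mem_insert.2 (Or.inr (Finset.mem_union.2 (Or.inr ?_)))
      rw [hsn, Finset.mem_filter]
      refine ⟨?_, by linarith [abs_lt.1 hc.1], hneg⟩
      rw [hs, Set.Finite.mem_toFinset]
      exact ⟨⟨by linarith [abs_lt.1 hc.1], by linarith [abs_lt.1 hc.1]⟩, by linarith [hc.2]⟩
    · exact Finset.mem_insert_self 0 _
    · refine Finset.mem_insert.2 (Or.inr (Finset.mem_union.2 (Or.inl ?_)))
      rw [hsp, Finset.mem_filter]
      refine ⟨?_, hpos, by linarith [abs_lt.1 hc.1]⟩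
      rw [hs, Set.Finite.mem_toFinset]
      exact ⟨⟨by linarith [abs_lt.1 hc.1], by linarith [abs_lt.1 hc.1]⟩, by linarith [hc.2]⟩
  -- split the finite sum
  have h0notin : (0:ℝ) ∉ sp ∪ sn := by
    rw [Finset.mem_union, hsp, hsn]
    rintro (hmem | hmem) <;>
      simp only [Finset.mem_filter] at hmem <;> linarith [hmem.2.1, hmem.2.2]
  have hdisj : Disjoint sp sn := by
    rw [Finset.disjoint_left]
    intro b hb1 hb2
    rw [hsp, Finset.mem_filter] at hb1
    rw [hsn, Finset.mem_filter] at hb2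
    linarith [hb1.2.1, hb2.2.2]
  have hsplit : ∑ b ∈ t, G h r b = G h r 0 + ∑ b ∈ sp, G h r b + ∑ b ∈ sn, G h r b := by
    rw [ht, Finset.sum_insert h0notin, Finset.sum_union hdisj]
    ring
  -- value formula on the right
  have hposf : h r = h 0 + derivWithin h (Set.Ici 0) 0 * r + ∑ b ∈ sp, omega h b * (r - b) := by
    have := value_formula hm hr sp
      (fun b hb => by
        rw [hsp, Finset.mem_filter] at hb
        exact ⟨hb.2.1, hb.2.2⟩)
      (fun x hx hne => by
        rw [hsp, Finset.mem_filter]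
        refine ⟨?_, hx.1, hx.2⟩
        rw [hs, Set.Finite.mem_toFinset]
        exact ⟨⟨by linarith [hx.1], hx.2.le⟩, hne⟩)
    simpa using this
  -- value formula on the left (reflected)
  set hrefl : ℝ → ℝ := fun x => h (-x) with hhrefl
  have hmrefl : IsTropMero hrefl := isTropMero_reflect hm
  set snr := sn.image (fun b => -b) with hsnr
  have hnegf : h (-r) = h 0 - derivWithin h (Set.Iic 0) 0 * r
      + ∑ b ∈ sn, omega h b * (r + b) := by
    have hv := value_formula hmrefl hr snr
      (fun b hb => by
        rw [hsnr, Finset.mem_image] at hb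
        obtain ⟨c, hc, rfl⟩ := hb
        rw [hsn, Finset.mem_filter] at hc
        exact ⟨by linarith [hc.2.2], by linarith [hc.2.1]⟩)
      (fun x hx hne => by
        rw [hsnr, Finset.mem_image]
        refine ⟨-x, ?_, by ring⟩
        rw [hsn, Finset.mem_filter]
        rw [omega_reflect hm] at hne
        refine ⟨?_, by linarith [hx.2], by linarith [hx.1]⟩
        rw [hs, Set.Finite.mem_toFinset]
        exact ⟨⟨by linarith [hx.2], by linarith [hx.1]⟩, hne⟩)
    have h1 : hrefl r = h (-r) := rfl
    have h2 : hrefl 0 = h 0 := by rw [hhrefl]; norm_num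
    have h3 : derivWithin hrefl (Set.Ici 0) 0 = - derivWithin h (Set.Iic 0) 0 := by
      have := dR_reflect hm 0
      simpa using this
    have h4 : ∑ b ∈ snr, omega hrefl b * (r - b) = ∑ b ∈ sn, omega h b * (r + b) := by
      rw [hsnr, Finset.sum_image (fun x _ y _ hxy => neg_injective hxy)]
      refine Finset.sum_congr rfl fun b hb => ?_
      rw [hhrefl, omega_reflect hm, neg_neg, sub_neg_eq_add]
    rw [h1, h2, h3, h4] at hv
    rw [hv]; ring
  -- identify G terms
  have hG0 : G h r 0 = omega h 0 * r := by
    rw [G_eq hm]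
    by_cases hc : 0 < omega h 0
    · rw [if_pos ⟨by rwa [abs_zero], hc⟩, abs_zero, sub_zero]
    · have : omega h 0 = 0 := le_antisymm (not_lt.1 hc) (he.2 0)
      rw [if_neg (fun hcc => hc hcc.2), this, zero_mul]
  have hGp : ∑ b ∈ sp, G h r b = ∑ b ∈ sp, omega h b * (r - b) := by
    refine Finset.sum_congr rfl fun b hb => ?_
    rw [hsp, Finset.mem_filter] at hb
    obtain ⟨hbs, hb0, hbr⟩ := hb
    rw [hs, Set.Finite.mem_toFinset] at hbs
    have hpos : 0 < omega h b := lt_of_le_of_ne (he.2 b) (Ne.symm hbs.2)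
    rw [G_eq hm, if_pos ⟨by rwa [abs_of_pos hb0], hpos⟩, abs_of_pos hb0]
  have hGn : ∑ b ∈ sn, G h r b = ∑ b ∈ sn, omega h b * (r + b) := by
    refine Finset.sum_congr rfl fun b hb => ?_
    rw [hsn, Finset.mem_filter] at hb
    obtain ⟨hbs, hbr, hb0⟩ := hb
    rw [hs, Set.Finite.mem_toFinset] at hbs
    have hpos : 0 < omega h b := lt_of_le_of_ne (he.2 b) (Ne.symm hbs.2)
    rw [G_eq hm, if_pos ⟨by rw [abs_of_neg hb0]; linarith, hpos⟩, abs_of_neg hb0,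
      sub_neg_eq_add]
  -- put everything together
  rw [countNroots_eq_tsum, hts, hsplit, hG0, hGp, hGn]
  have homega : omega h 0 = derivWithin h (Set.Ici 0) 0 - derivWithin h (Set.Iic 0) 0 := rfl
  have hsum1 : ∑ b ∈ sp, omega h b * (r - b) = h r - h 0 - derivWithin h (Set.Ici 0) 0 * r := by
    linarith [hposf]
  have hsum2 : ∑ b ∈ sn, omega h b * (r + b) = h (-r) - h 0 + derivWithin h (Set.Iic 0) 0 * r := by
    linarith [hnegf]
  rw [hsum1, hsum2, homega]
  ring

/-- single-term lower bound on countNroots. -/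
lemma countNroots_lower (he : IsTropEntire h) {b r : ℝ} (hb : |b| < r) :
    omega h b * (r - |b|) / 2 ≤ countNroots h r := by
  have hm := he.1
  rw [countNroots_eq_tsum]
  have hle : G h r b ≤ ∑' b', G h r b' :=
    Summable.le_tsum (G_summable hm r) b (fun b' _ => G_nonneg hm r b')
  have hGb : omega h b * (r - |b|) ≤ G h r b := by
    rw [G_eq hm]
    by_cases hc : 0 < omega h b
    · rw [if_pos ⟨hb, hc⟩]
    · have h0 : omega h b = 0 := le_antisymm (not_lt.1 hc) (he.2 b)
      rw [if_neg (fun hcc => hc hcc.2), h0, zero_mul]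
  linarith
end Jensen

/-- with no breakpoints a tropical meromorphic function is affine. -/
lemma affine_of_no_breaks {h : ℝ → ℝ} (hm : IsTropMero h) (hz : ∀ x, omega h x = 0) :
    ∀ x, h x = h 0 + derivWithin h (Set.Ici 0) 0 * x := by
  intro x
  rcases lt_trichotomy x 0 with hneg | rfl | hpos
  · have hrefl := isTropMero_reflect hm
    have hv := value_formula hrefl (u := 0) (v := -x) (by linarith) ∅
      (by simp) (fun y hy hne => by
        rw [omega_reflect hm] at hne
        exact absurd (hz (-y)) hne)
    simp only [Finset.sum_empty, neg_zero, add_zero, sub_zero, neg_neg] at hv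
    rw [dR_reflect hm 0, neg_zero] at hv
    have hLR : derivWithin h (Set.Iic 0) 0 = derivWithin h (Set.Ici 0) 0 := by
      have := hz 0; rw [omega] at this; linarith
    rw [hLR] at hv
    rw [hv]; ring
  · simp
  · have hv := value_formula hm (u := 0) (v := x) hpos ∅
      (by simp) (fun y hy hne => absurd (hz y) hne)
    simp only [Finset.sum_empty, add_zero, sub_zero] at hv
    rw [hv]

/-- entire, bounded above by 0 implies constant. -/
lemma entire_const_of_nonpos {h : ℝ → ℝ} (he : IsTropEntire h) (hle : ∀ x, h x ≤ 0) :
    ∀ x, h x = h 0 := by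
  have hz : ∀ x, omega h x = 0 := by
    intro b
    by_contra hne
    have hpos : 0 < omega h b := lt_of_le_of_ne (he.2 b) (Ne.symm hne)
    have hkey : ∀ r : ℝ, |b| < r → omega h b * (r - |b|) / 2 ≤ - h 0 := by
      intro r hr
      have h1 := countNroots_lower he hr
      have h2 := jensen he (lt_of_le_of_lt (abs_nonneg b) hr)
      have h3 := hle r; have h4 := hle (-r)
      rw [h2] at h1
      linarith
    have hb0 : (0:ℝ) ≤ -h 0 := by linarith [hle 0]
    set r := |b| + (2 * (-h 0) + 2) / omega h b with hrdef
    have hrpos : |b| < r := by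
      rw [hrdef]
      have : 0 < (2 * (-h 0) + 2) / omega h b := by positivity
      linarith
    have := hkey r hrpos
    rw [hrdef] at this
    have heq : omega h b * (|b| + (2 * (-h 0) + 2) / omega h b - |b|) / 2 = -h 0 + 1 := by
      field_simp
      ring
    rw [heq] at this
    linarith
  intro x
  have haff := affine_of_no_breaks he.1 hz
  set s := derivWithin h (Set.Ici 0) 0 with hs
  have hs0 : s = 0 := by
    by_contra hsne
    have := hle ((1 - h 0) / s)
    rw [haff ((1 - h 0) / s)] at this
    rw [mul_div_cancel₀ _ hsne] at this
    linarith
  rw [haff x, hs0]; ring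

/-- main pointwise comparison |max(a+p, q) - max(p, q)| ≤ |a| -/
lemma max_shift_bound (a p q : ℝ) : |max (a + p) q - max p q| ≤ |a| := by
  rw [abs_le]
  constructor
  · have h1 : p ≤ max (a + p) q + |a| := by
      calc p = (a + p) + (-a) := by ring
        _ ≤ max (a + p) q + |a| := add_le_add (le_max_left _ _) (neg_le_abs a)
    have h2 : q ≤ max (a + p) q + |a| := le_add_of_le_of_nonneg (le_max_right _ _) (abs_nonneg a)
    have := max_le h1 h2
    linarith
  · have h1 : a + p ≤ max p q + |a| := by
      calc a + p ≤ |a| + p := add_le_add (le_abs_self a) le_rfl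
        _ ≤ |a| + max p q := by linarith [le_max_left p q]
        _ = max p q + |a| := by ring
    have h2 : q ≤ max p q + |a| := le_add_of_le_of_nonneg (le_max_right _ _) (abs_nonneg a)
    have := max_le h1 h2
    linarith

end TropNev
end

/-- tropical Nevanlinna second main theorem, equality form. -/
theorem stmt15 {q : ℕ} (hq : 1 ≤ q)
    (f0 f1 : ℝ → ℝ) (hred : ReducedPair f0 f1)
    (f : ℝ → ℝ) (hfdef : f = fun x => f1 x - f0 x)
    (hnc : ¬ ∃ k : ℝ, ∀ x : ℝ, f x = k)
    (hgrow : LimsupZero fun r => Real.log (charT2 f0 f1 r) / r)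
    (a : Fin q → ℝ) (hdist : Function.Injective a)
    (ha : ∀ j : Fin q, ¬ ∀ x : ℝ, max (f x) (a j) = a j) :
    ∃ (E : Set ℝ) (ε : ℝ → ℝ), ZeroUpperDensity E ∧
      Filter.Tendsto ε (Filter.atTop ⊓ Filter.principal Eᶜ) (nhds 0) ∧
      ∀ r : ℝ, r ∉ E →
        |(q : ℝ) * charT2 f0 f1 r -
            ∑ j : Fin q, countNroots (fun x => max (a j + f0 x) (f1 x)) r|
          ≤ ε r * charT2 f0 f1 r := by
  classical
  obtain ⟨hf0, hf1, -⟩ := hred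
  set M : ℝ → ℝ := fun x => max (f0 x) (f1 x) with hM
  have hMe : IsTropEntire M := isTropEntire_max hf0 hf1
  have hchar : ∀ r : ℝ, charT2 f0 f1 r = (M r + M (-r)) / 2 - M 0 := fun r => rfl
  -- the entire functions g j
  set g : Fin q → ℝ → ℝ := fun j x => max (a j + f0 x) (f1 x) with hg
  have hge : ∀ j, IsTropEntire (g j) := fun j =>
    isTropEntire_max (isTropEntire_const_add hf0 (a j)) hf1
  -- comparison
  have hcomp : ∀ (j : Fin q) (r : ℝ), 0 < r →
      |countNroots (g j) r - charT2 f0 f1 r| ≤ 2 * |a j| := by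
    intro j r hr
    rw [jensen (hge j) hr, hchar r]
    have b1 := abs_le.1 (max_shift_bound (a j) (f0 r) (f1 r))
    have b2 := abs_le.1 (max_shift_bound (a j) (f0 (-r)) (f1 (-r)))
    have b3 := abs_le.1 (max_shift_bound (a j) (f0 0) (f1 0))
    rw [abs_le]
    constructor <;> nlinarith [b1.1, b1.2, b2.1, b2.2, b3.1, b3.2]
  -- nonconstancy gives a breakpoint of M
  have hbreak : ∃ b0 : ℝ, 0 < omega M b0 := by
    by_contra hno
    push_neg at hno
    have hz : ∀ x, omega M x = 0 := fun x => le_antisymm (hno x) (hMe.2 x)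
    have haff := affine_of_no_breaks hMe.1 hz
    set A := M 0 with hA
    set Bs := derivWithin M (Set.Ici 0) 0 with hBs
    -- f0 and f1 are affine plus constants
    have hconst : ∀ (p : ℝ → ℝ), IsTropEntire p → (∀ x, p x ≤ M x) →
        ∀ x, p x - (A + Bs * x) = p 0 - A := by
      intro p hp hple
      have hent : IsTropEntire (fun x => p x - (A + Bs * x)) :=
        ⟨isTropMero_sub_affine hp.1 A Bs, fun x => by
          rw [omega_sub_affine hp.1 A Bs x]; exact hp.2 x⟩
      have hle : ∀ x, p x - (A + Bs * x) ≤ 0 := fun x => by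
        have h1 := hple x
        have h2 := haff x
        linarith
      have := entire_const_of_nonpos hent hle
      intro x
      have hx := this x
      simpa using hx
    have hc0 := hconst f0 hf0 (fun x => le_max_left _ _)
    have hc1 := hconst f1 hf1 (fun x => le_max_right _ _)
    apply hnc
    refine ⟨f1 0 - f0 0, fun x => ?_⟩
    rw [hfdef]
    have e0 := hc0 x
    have e1 := hc1 x
    simp only at e0 e1 ⊢
    linarith
  obtain ⟨b0, hb0⟩ := hbreak
  -- charT2 equals countNroots of M, tends to infinity
  have hTN : ∀ r : ℝ, 0 < r → charT2 f0 f1 r = countNroots M r := by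
    intro r hr
    rw [jensen hMe hr, hchar r]
  have hTlow : ∀ r : ℝ, |b0| < r → omega M b0 * (r - |b0|) / 2 ≤ charT2 f0 f1 r := by
    intro r hr
    rw [hTN r (lt_of_le_of_lt (abs_nonneg b0) hr)]
    exact countNroots_lower hMe hr
  have hTtop : Tendsto (charT2 f0 f1) atTop atTop := by
    refine tendsto_atTop_mono' atTop
      (f₁ := fun r => omega M b0 * (r - |b0|) / 2) ?_ ?_
    · filter_upwards [eventually_gt_atTop |b0|] with r hr
      exact hTlow r hr
    · apply Tendsto.atTop_div_const two_pos
      apply Tendsto.const_mul_atTop hb0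
      exact tendsto_atTop_add_const_right _ _ tendsto_id
  -- choose R0
  obtain ⟨R1, hR1⟩ := (hTtop.eventually (eventually_ge_atTop (1:ℝ))).exists_forall_of_atTop
  set R0 := max R1 1 with hR0
  have hTge : ∀ r : ℝ, R0 ≤ r → 1 ≤ charT2 f0 f1 r := fun r hr =>
    hR1 r (le_trans (le_max_left _ _) hr)
  -- the exceptional set and error function
  set C : ℝ := ∑ j : Fin q, 2 * |a j| with hC
  have hCnn : 0 ≤ C := Finset.sum_nonneg fun j _ => by positivity
  refine ⟨Set.Iio R0, fun r => C / charT2 f0 f1 r, ?_, ?_, ?_⟩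
  · -- zero upper density
    set K := max 1 R0 - 1 with hK
    have hKnn : 0 ≤ K := by
      rw [hK]; have := le_max_left (1:ℝ) R0; linarith
    have hvol : ∀ r : ℝ, (volume (Set.Iio R0 ∩ Set.Icc 1 r)).toReal ≤ K := by
      intro r
      have hsub : Set.Iio R0 ∩ Set.Icc 1 r ⊆ Set.Icc 1 (max 1 R0) := fun x hx =>
        ⟨hx.2.1, le_trans hx.1.le (le_max_right _ _)⟩
      have h1 : volume (Set.Iio R0 ∩ Set.Icc 1 r) ≤ volume (Set.Icc 1 (max 1 R0)) :=
        measure_mono hsub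
      have h2 : volume (Set.Icc (1:ℝ) (max 1 R0)) = ENNReal.ofReal (max 1 R0 - 1) :=
        Real.volume_Icc
      calc (volume (Set.Iio R0 ∩ Set.Icc 1 r)).toReal
          ≤ (volume (Set.Icc (1:ℝ) (max 1 R0))).toReal := by
            apply ENNReal.toReal_mono _ h1
            rw [h2]; exact ENNReal.ofReal_ne_top
        _ = K := by rw [h2, hK, ENNReal.toReal_ofReal hKnn]
    constructor
    · intro ε hε
      filter_upwards [eventually_ge_atTop (max 1 (K / ε + 1))] with r hr
      have hr1 : (1:ℝ) ≤ r := le_trans (le_max_left _ _) hr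
      have hr2 : K / ε + 1 ≤ r := le_trans (le_max_right _ _) hr
      have hrpos : (0:ℝ) < r := by linarith
      calc (volume (Set.Iio R0 ∩ Set.Icc 1 r)).toReal / r
          ≤ K / r := by gcongr; exact hvol r
        _ < ε := by
            rw [div_lt_iff₀ hrpos]
            have hKε : ε * (K / ε) = K := by field_simp
            have hmul : ε * (K / ε + 1) ≤ ε * r := mul_le_mul_of_nonneg_left hr2 hε.le
            nlinarith [hKε, hmul]
    · intro ε hε
      refine (Filter.eventually_iff_exists_mem.2 ?_).frequently
      refine ⟨Set.Ioi 0, Ioi_mem_atTop 0, fun r hr => ?_⟩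
      have : 0 ≤ (volume (Set.Iio R0 ∩ Set.Icc 1 r)).toReal / r :=
        div_nonneg ENNReal.toReal_nonneg (le_of_lt hr)
      linarith
  · -- tendsto of the error function
    exact (Tendsto.div_atTop tendsto_const_nhds hTtop).mono_left inf_le_left
  · -- the main estimate
    intro r hr
    rw [Set.mem_Iio, not_lt] at hr
    have hrpos : (0:ℝ) < r := lt_of_lt_of_le (lt_of_lt_of_le one_pos (le_max_right R1 1)) hr
    have hT1 : 1 ≤ charT2 f0 f1 r := hTge r hr
    have hTpos : 0 < charT2 f0 f1 r := by linarith
    have hmain : |(q : ℝ) * charT2 f0 f1 r -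
        ∑ j : Fin q, countNroots (fun x => max (a j + f0 x) (f1 x)) r| ≤ C := by
      have hrw : (q : ℝ) * charT2 f0 f1 r -
          ∑ j : Fin q, countNroots (fun x => max (a j + f0 x) (f1 x)) r
          = ∑ j : Fin q, (charT2 f0 f1 r - countNroots (g j) r) := by
        rw [Finset.sum_sub_distrib]
        simp [hg, Finset.sum_const, Finset.card_univ, mul_comm]
      rw [hrw]
      calc |∑ j : Fin q, (charT2 f0 f1 r - countNroots (g j) r)|
          ≤ ∑ j : Fin q, |charT2 f0 f1 r - countNroots (g j) r| :=
            Finset.abs_sum_le_sum_abs _ _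
        _ ≤ ∑ j : Fin q, 2 * |a j| := by
            refine Finset.sum_le_sum fun j _ => ?_
            rw [abs_sub_comm]
            exact hcomp j r hrpos
        _ = C := rfl
    calc |(q : ℝ) * charT2 f0 f1 r -
        ∑ j : Fin q, countNroots (fun x => max (a j + f0 x) (f1 x)) r| ≤ C := hmain
      _ = C / charT2 f0 f1 r * charT2 f0 f1 r := by
          rw [div_mul_cancel₀ _ (ne_of_gt hTpos)]
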